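/- Let F and G be two distinct monotone increasing, continuous cumulative distribution functions on ℝ. Let {X_i, i = 1, ..., n} be an i.i.d. sample from F and {Y_i, i = 1, ..., n} an independent i.i.d. sample from G, with order statistics X_(1) ≤ ... ≤ X_(n) and Y_(1) ≤ ... ≤ Y_(n). Set α_n = √(log n · log log n / n), β_n = 1 - α_n, and Λ_m = {i ∈ ℕ : α_n·n < i < β_n·n}. Then the two convergences q_{n,Λ_m}^(1) := max_{i ∈ Λ_m} X_(i)/Y_(i) →_P 1 and q_{n,Λ_m}^(2) := max_{i ∈ Λ_m} Y_(i)/X_(i) →_P 1 cannot hold simultaneously; in fact there exists ε > 0 such that P(|q_{n,Λ_m}^(1) − 1| < ε and |q_{n,Λ_m}^(2) − 1| < ε) → 0 as n → ∞. -/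

import Mathlib

open MeasureTheory ProbabilityTheory Filter Finset Real Topology ENNReal

/-- `orderStat n v i` is the `i`-th order statistic (1-indexed) of the values
`v 0, …, v (n-1)`, i.e. the `i`-th smallest among them. -/
noncomputable def orderStat (n : ℕ) (v : ℕ → ℝ) (i : ℕ) : ℝ :=
  ((List.ofFn fun j : Fin n => v j).insertionSort (· ≤ ·)).getD (i - 1) 0

/-- `α_n = √(log n · log log n / n)`. -/
noncomputable def alphaN (n : ℕ) : ℝ := Real.sqrt (Real.log n * Real.log (Real.log n) / n)

/-- The maximum ranked quotient over the middle index set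
`Λ_m = {i : α_n n < i < (1-α_n) n}` with `α_n = √(log n · log log n / n)`. -/
noncomputable def qMid (n : ℕ) (v w : ℕ → ℝ) : ℝ :=
  ⨆ i : {i : ℕ // alphaN n * n < (i : ℝ) ∧ (i : ℝ) < (1 - alphaN n) * n},
    orderStat n v i.1 / orderStat n w i.1

section Aux


lemma sorted_getElem_le_iff {s : List ℝ} (hs : s.Pairwise (· ≤ ·)) {i : ℕ} (hi : i < s.length)
    (t : ℝ) : s[i] ≤ t ↔ i + 1 ≤ s.countP (fun x => decide (x ≤ t)) := by
  have hmemdrop : s[i] ∈ s.drop i := by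
    have h0 : 0 < (s.drop i).length := by simp [List.length_drop]; omega
    have := List.getElem_mem (l := s.drop i) (h := h0)
    rw [List.getElem_drop] at this
    simpa using this
  constructor
  · intro h
    have hsplit : s.countP (fun x => decide (x ≤ t)) =
        (s.take i).countP (fun x => decide (x ≤ t)) +
        (s.drop i).countP (fun x => decide (x ≤ t)) := by
      conv_lhs => rw [← List.take_append_drop i s]
      rw [List.countP_append]
    have h1 : (s.take i).countP (fun x => decide (x ≤ t)) = i := by
      rw [List.countP_eq_length.2, List.length_take]
      · omega
      · intro x hx
        simp only [decide_eq_true_eq]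
        exact le_trans (hs.rel_of_mem_take_of_mem_drop hx hmemdrop) h
    have h2 : 0 < (s.drop i).countP (fun x => decide (x ≤ t)) := by
      rw [List.countP_pos_iff]
      exact ⟨s[i], hmemdrop, by simpa using h⟩
    omega
  · intro h
    by_contra hlt
    push_neg at hlt
    have h2 : (s.drop i).countP (fun x => decide (x ≤ t)) = 0 := by
      rw [List.countP_eq_zero]
      intro x hx
      obtain ⟨j, hj, rfl⟩ := List.getElem_of_mem hx
      rw [List.getElem_drop]
      simp only [decide_eq_true_eq, not_le]
      refine lt_of_lt_of_le hlt ?_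
      have := hs.rel_get_of_le (a := ⟨i, hi⟩)
        (b := ⟨i + j, by rw [List.length_drop] at hj; omega⟩) (by simp)
      simpa using this
    have hsplit : s.countP (fun x => decide (x ≤ t)) =
        (s.take i).countP (fun x => decide (x ≤ t)) +
        (s.drop i).countP (fun x => decide (x ≤ t)) := by
      conv_lhs => rw [← List.take_append_drop i s]
      rw [List.countP_append]
    have h1 : (s.take i).countP (fun x => decide (x ≤ t)) ≤ i := by
      have := List.countP_le_length (l := s.take i) (p := fun x => decide (x ≤ t))
      exact le_trans this (by simp [List.length_take])
    omega

lemma countP_ofFn (n : ℕ) (v : ℕ → ℝ) (t : ℝ) :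
    (List.ofFn fun j : Fin n => v j).countP (fun x => decide (x ≤ t)) =
      ((Finset.range n).filter (fun j => v j ≤ t)).card := by
  induction n generalizing v with
  | zero => simp
  | succ m ih =>
    rw [List.ofFn_succ, List.countP_cons, Finset.card_filter, Finset.sum_range_succ',
      ← Finset.card_filter, ← ih (fun j => v (j + 1))]
    simp [Fin.val_succ]
    by_cases h : v 0 ≤ t <;> simp [h]


/-- the key characterization -/
lemma orderStat_le_iff {n i : ℕ} (h1 : 1 ≤ i) (h2 : i ≤ n) (v : ℕ → ℝ) (t : ℝ) :
    orderStat n v i ≤ t ↔ i ≤ ((Finset.range n).filter (fun j => v j ≤ t)).card := by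
  set s := (List.ofFn fun j : Fin n => v j).insertionSort (· ≤ ·) with hsdef
  have hperm : s.Perm (List.ofFn fun j : Fin n => v j) := List.perm_insertionSort _ _
  have hlen : s.length = n := by rw [hperm.length_eq]; simp
  have hsort : s.Pairwise (· ≤ ·) := List.pairwise_insertionSort _ _
  have hidx : i - 1 < s.length := by omega
  have hgetD : orderStat n v i = s[i - 1] := by
    rw [orderStat, List.getD_eq_getElem _ _ hidx]
  rw [hgetD, sorted_getElem_le_iff hsort hidx, hperm.countP_eq, countP_ofFn]
  omega

variable {Ω : Type*} [MeasurableSpace Ω]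




lemma measurable_count (W : ℕ → Ω → ℝ) (hW : ∀ i, Measurable (W i)) (n : ℕ) (t : ℝ) :
    Measurable (fun ω => ((Finset.range n).filter fun j => W j ω ≤ t).card) := by
  have h : (fun ω => ((Finset.range n).filter fun j => W j ω ≤ t).card)
      = fun ω => ∑ j ∈ Finset.range n, if W j ω ≤ t then 1 else 0 := by
    funext ω; rw [Finset.card_filter]
  rw [h]
  exact Finset.measurable_sum _ fun j _ =>
    Measurable.ite (measurableSet_le (hW j) measurable_const) measurable_const measurable_const

lemma measurable_orderStat (W : ℕ → Ω → ℝ) (hW : ∀ i, Measurable (W i))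
    {n i : ℕ} (h1 : 1 ≤ i) (h2 : i ≤ n) :
    Measurable (fun ω => orderStat n (fun j => W j ω) i) := by
  apply measurable_of_Iic
  intro t
  have h : (fun ω => orderStat n (fun j => W j ω) i) ⁻¹' (Set.Iic t)
      = (fun ω => ((Finset.range n).filter fun j => W j ω ≤ t).card) ⁻¹' (Set.Ici i) := by
    ext ω
    simp only [Set.mem_preimage, Set.mem_Iic, Set.mem_Ici]
    exact orderStat_le_iff h1 h2 _ t
  rw [h]
  exact measurable_count W hW n t measurableSet_Ici


lemma empCDF_ae (μ : Measure Ω) [IsProbabilityMeasure μ]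
    (H : ℝ → ℝ) (W : ℕ → Ω → ℝ) (hWmeas : ∀ i, Measurable (W i))
    (hindep : Pairwise fun i j => IndepFun (W i) (W j) μ)
    (hW : ∀ i x, μ {ω | W i ω ≤ x} = ENNReal.ofReal (H x))
    (t : ℝ) (hH0 : 0 ≤ H t) :
    ∀ᵐ ω ∂μ, Tendsto (fun n => (((Finset.range n).filter fun j => W j ω ≤ t).card : ℝ) / n)
      atTop (𝓝 (H t)) := by
  set g : ℝ → ℝ := fun x => if x ≤ t then 1 else 0 with hg
  have hgmeas : Measurable g :=
    Measurable.ite measurableSet_Iic measurable_const measurable_const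
  set Z : ℕ → Ω → ℝ := fun i ω => g (W i ω) with hZ
  have hZmeas : ∀ i, Measurable (Z i) := fun i => hgmeas.comp (hWmeas i)
  have hint : Integrable (Z 0) μ := by
    have hb : ∀ ω, ‖Z 0 ω‖ ≤ 1 := by
      intro ω; simp only [hZ, hg]; split <;> simp
    exact (integrable_const (1:ℝ)).mono' (hZmeas 0).aestronglyMeasurable
      (Filter.Eventually.of_forall hb)
  have hindep' : Pairwise (Function.onFun (IndepFun · · μ) Z) := fun i j hij =>
    (hindep hij).comp hgmeas hgmeas
  have hident : ∀ i, IdentDistrib (Z i) (Z 0) μ μ := by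
    intro i
    have hWident : IdentDistrib (W i) (W 0) μ μ := by
      refine ⟨(hWmeas i).aemeasurable, (hWmeas 0).aemeasurable, ?_⟩
      have h1 : IsFiniteMeasure (μ.map (W i)) := by
        have : IsProbabilityMeasure (μ.map (W i)) :=
          Measure.isProbabilityMeasure_map (hWmeas i).aemeasurable
        infer_instance
      have h2 : IsFiniteMeasure (μ.map (W 0)) := by
        have : IsProbabilityMeasure (μ.map (W 0)) :=
          Measure.isProbabilityMeasure_map (hWmeas 0).aemeasurable
        infer_instance
      refine Measure.ext_of_Iic _ _ (fun x => ?_)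
      rw [Measure.map_apply (hWmeas i) measurableSet_Iic,
        Measure.map_apply (hWmeas 0) measurableSet_Iic]
      show μ {ω | W i ω ≤ x} = μ {ω | W 0 ω ≤ x}
      rw [hW i x, hW 0 x]
    exact hWident.comp hgmeas
  have hSLLN := strong_law_ae_real Z hint hindep' hident
  have hEZ : μ[Z 0] = H t := by
    have hZind : Z 0 = Set.indicator ((W 0) ⁻¹' (Set.Iic t)) (fun _ => (1:ℝ)) := by
      funext ω
      simp only [hZ, hg, Set.indicator, Set.mem_preimage, Set.mem_Iic]
    rw [hZind, integral_indicator_const _ ((hWmeas 0) measurableSet_Iic)]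
    have : μ ((W 0) ⁻¹' (Set.Iic t)) = ENNReal.ofReal (H t) := hW 0 t
    rw [measureReal_def, this]
    simp [ENNReal.toReal_ofReal hH0]
  rw [hEZ] at hSLLN
  filter_upwards [hSLLN] with ω hω
  have hcount : ∀ n, (((Finset.range n).filter fun j => W j ω ≤ t).card : ℝ)
      = ∑ i ∈ Finset.range n, Z i ω := by
    intro n
    rw [Finset.card_filter]
    push_cast
    apply Finset.sum_congr rfl
    intro j _
    simp only [hZ, hg]
  simpa only [hcount] using hω

lemma quantile_ae (μ : Measure Ω) [IsProbabilityMeasure μ]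
    (H : ℝ → ℝ) (hHmono : StrictMono H) (W : ℕ → Ω → ℝ) (hWmeas : ∀ i, Measurable (W i))
    (hindep : Pairwise fun i j => IndepFun (W i) (W j) μ)
    (hW : ∀ i x, μ {ω | W i ω ≤ x} = ENNReal.ofReal (H x))
    (hH0 : ∀ x, 0 ≤ H x)
    (a p : ℝ) (hpa : H a = p)
    (I : ℕ → ℕ) (hIb : ∀ n, 1 ≤ n → 1 ≤ I n ∧ I n ≤ n)
    (hIp : Tendsto (fun n => (I n : ℝ) / n) atTop (𝓝 p)) :
    ∀ᵐ ω ∂μ, Tendsto (fun n => orderStat n (fun j => W j ω) (I n)) atTop (𝓝 a) := by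
  have hae : ∀ᵐ ω ∂μ, ∀ k : ℕ,
      (Tendsto (fun n => (((Finset.range n).filter
          fun j => W j ω ≤ a - 1/(k+1)).card : ℝ) / n) atTop (𝓝 (H (a - 1/(k+1)))) ∧
       Tendsto (fun n => (((Finset.range n).filter
          fun j => W j ω ≤ a + 1/(k+1)).card : ℝ) / n) atTop (𝓝 (H (a + 1/(k+1))))) := by
    rw [ae_all_iff]
    intro k
    exact (empCDF_ae μ H W hWmeas hindep hW _ (hH0 _)).and
      (empCDF_ae μ H W hWmeas hindep hW _ (hH0 _))
  filter_upwards [hae] with ω hω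
  -- key step: for t with H t < p, eventually orderStat > t
  have key_lo : ∀ t : ℝ, H t < p →
      (Tendsto (fun n => (((Finset.range n).filter fun j => W j ω ≤ t).card : ℝ) / n)
        atTop (𝓝 (H t))) →
      ∀ᶠ n in atTop, t < orderStat n (fun j => W j ω) (I n) := by
    intro t hlt hc
    have hmid : H t < (H t + p)/2 := by linarith
    have hmid2 : (H t + p)/2 < p := by linarith
    have h1 : ∀ᶠ n in atTop,
        (((Finset.range n).filter fun j => W j ω ≤ t).card : ℝ) / n < (H t + p)/2 :=
      hc.eventually_lt_const hmid
    have h2 : ∀ᶠ n in atTop, (H t + p)/2 < (I n : ℝ)/n :=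
      hIp.eventually_const_lt hmid2
    filter_upwards [h1, h2, eventually_ge_atTop 1] with n hn1 hn2 hn3
    by_contra hcon
    push_neg at hcon
    rw [orderStat_le_iff (hIb n hn3).1 (hIb n hn3).2] at hcon
    have hnpos : (0:ℝ) < n := by exact_mod_cast hn3
    have : (I n : ℝ)/n ≤ (((Finset.range n).filter fun j => W j ω ≤ t).card : ℝ) / n := by
      have : (I n : ℝ) ≤ (((Finset.range n).filter fun j => W j ω ≤ t).card : ℝ) := by
        exact_mod_cast hcon
      gcongr
    linarith
  have key_hi : ∀ t : ℝ, p < H t →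
      (Tendsto (fun n => (((Finset.range n).filter fun j => W j ω ≤ t).card : ℝ) / n)
        atTop (𝓝 (H t))) →
      ∀ᶠ n in atTop, orderStat n (fun j => W j ω) (I n) ≤ t := by
    intro t hlt hc
    have hmid : (H t + p)/2 < H t := by linarith
    have hmid2 : p < (H t + p)/2 := by linarith
    have h1 : ∀ᶠ n in atTop,
        (H t + p)/2 < (((Finset.range n).filter fun j => W j ω ≤ t).card : ℝ) / n :=
      hc.eventually_const_lt hmid
    have h2 : ∀ᶠ n in atTop, (I n : ℝ)/n < (H t + p)/2 :=
      hIp.eventually_lt_const hmid2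
    filter_upwards [h1, h2, eventually_ge_atTop 1] with n hn1 hn2 hn3
    rw [orderStat_le_iff (hIb n hn3).1 (hIb n hn3).2]
    have hnpos : (0:ℝ) < n := by exact_mod_cast hn3
    have : (I n : ℝ)/n < (((Finset.range n).filter fun j => W j ω ≤ t).card : ℝ) / n := by
      linarith
    have := (div_lt_div_iff_of_pos_right hnpos).mp this
    exact_mod_cast this.le
  rw [tendsto_order]
  constructor
  · intro c hc
    obtain ⟨k, hk⟩ : ∃ k : ℕ, 1/((k:ℝ)+1) < a - c := exists_nat_one_div_lt (by linarith)
    have ht : c < a - 1/((k:ℝ)+1) := by linarith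
    have hHt : H (a - 1/((k:ℝ)+1)) < p := by
      rw [← hpa]
      apply hHmono
      have : (0:ℝ) < 1/((k:ℝ)+1) := by positivity
      linarith
    filter_upwards [key_lo _ hHt (hω k).1] with n hn
    exact lt_trans ht hn
  · intro c hc
    obtain ⟨k, hk⟩ : ∃ k : ℕ, 1/((k:ℝ)+1) < c - a := exists_nat_one_div_lt (by linarith)
    have ht : a + 1/((k:ℝ)+1) < c := by linarith
    have hHt : p < H (a + 1/((k:ℝ)+1)) := by
      rw [← hpa]
      apply hHmono
      have : (0:ℝ) < 1/((k:ℝ)+1) := by positivity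
      linarith
    filter_upwards [key_hi _ hHt (hω k).2] with n hn
    exact lt_of_le_of_lt hn ht


section CDF
variable {F G : ℝ → ℝ}

lemma cdf_pos (hFmono : StrictMono F) (hF0 : Tendsto F atBot (𝓝 0)) (a : ℝ) : 0 < F a := by
  have h1 : F (a - 1) < F a := hFmono (by linarith)
  have h2 : 0 ≤ F (a - 1) := by
    refine le_of_tendsto hF0 ?_
    filter_upwards [eventually_le_atBot (a - 1)] with z hz
    exact hFmono.monotone hz
  linarith

lemma cdf_lt_one (hFmono : StrictMono F) (hF1 : Tendsto F atTop (𝓝 1)) (a : ℝ) : F a < 1 := by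
  have h1 : F a < F (a + 1) := hFmono (by linarith)
  have h2 : F (a + 1) ≤ 1 := by
    refine ge_of_tendsto hF1 ?_
    filter_upwards [eventually_ge_atTop (a + 1)] with z hz
    exact hFmono.monotone hz
  linarith

lemma cdf_surj (hFmono : StrictMono F) (hFcont : Continuous F)
    (hF0 : Tendsto F atBot (𝓝 0)) (hF1 : Tendsto F atTop (𝓝 1))
    {p : ℝ} (hp0 : 0 < p) (hp1 : p < 1) : ∃ a, F a = p := by
  obtain ⟨x, hx⟩ : ∃ x, F x < p := by
    have := hF0.eventually_lt_const hp0
    exact this.exists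
  obtain ⟨y, hy⟩ : ∃ y, p < F y := by
    have := hF1.eventually_const_lt hp1
    exact this.exists
  have hxy : x ≤ y := le_of_lt (hFmono.lt_iff_lt.mp (lt_trans hx hy))
  have := intermediate_value_Icc hxy hFcont.continuousOn
  obtain ⟨a, _, ha⟩ := this ⟨hx.le, hy.le⟩
  exact ⟨a, ha⟩

/-- helper for the case `F 0 < G 0` -/
lemma exists_pab_of_lt (hFmono : StrictMono F) (hFcont : Continuous F)
    (hF0 : Tendsto F atBot (𝓝 0)) (hF1 : Tendsto F atTop (𝓝 1))
    (hGmono : StrictMono G) (hGcont : Continuous G)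
    (hG0 : Tendsto G atBot (𝓝 0)) (hG1 : Tendsto G atTop (𝓝 1))
    (h : F 0 < G 0) :
    ∃ p a b, 0 < p ∧ p < 1 ∧ F a = p ∧ G b = p ∧ a ≠ b ∧ 0 < a * b := by
  obtain ⟨m, hm⟩ := cdf_surj hGmono hGcont hG0 hG1 (cdf_pos hFmono hF0 0)
      (cdf_lt_one hFmono hF1 0)
  -- G m = F 0 < G 0 so m < 0
  have hm0 : m < 0 := hGmono.lt_iff_lt.mp (by rw [hm]; exact h)
  set a := m / 2 with hadef
  have ham : m < a := by linarith
  have ha0 : a < 0 := by linarith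
  set p := F a with hpdef
  have hp0 : 0 < p := cdf_pos hFmono hF0 a
  have hp1 : p < 1 := cdf_lt_one hFmono hF1 a
  have hpq : p < F 0 := hFmono ha0
  obtain ⟨b, hb⟩ := cdf_surj hGmono hGcont hG0 hG1 hp0 hp1
  have hbm : b < m := by
    apply hGmono.lt_iff_lt.mp
    rw [hb, hm]; exact hpq
  exact ⟨p, a, b, hp0, hp1, rfl, hb, by linarith [hbm, ham] , by nlinarith⟩

lemma exists_pab (hFmono : StrictMono F) (hFcont : Continuous F)
    (hF0 : Tendsto F atBot (𝓝 0)) (hF1 : Tendsto F atTop (𝓝 1))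
    (hGmono : StrictMono G) (hGcont : Continuous G)
    (hG0 : Tendsto G atBot (𝓝 0)) (hG1 : Tendsto G atTop (𝓝 1))
    (hFG : F ≠ G) :
    ∃ p a b, 0 < p ∧ p < 1 ∧ F a = p ∧ G b = p ∧ a ≠ b ∧ 0 < a * b := by
  rcases lt_trichotomy (F 0) (G 0) with h | h | h
  · exact exists_pab_of_lt hFmono hFcont hF0 hF1 hGmono hGcont hG0 hG1 h
  · -- F 0 = G 0
    obtain ⟨x, hx⟩ : ∃ x, F x ≠ G x := by
      by_contra hcon
      push_neg at hcon
      exact hFG (funext hcon)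
    set lo := min (F x) (G x) with hlo
    set hi := max (F x) (G x) with hhi
    have hlohi : lo < hi := by
      rcases hx.lt_or_gt with h' | h'
      · rw [hlo, hhi, min_eq_left h'.le, max_eq_right h'.le]; exact h'
      · rw [hlo, hhi, min_eq_right h'.le, max_eq_left h'.le]; exact h'
    -- pick p in (lo, hi) distinct from F 0
    obtain ⟨p, hp⟩ : ∃ p, lo < p ∧ p < hi ∧ p ≠ F 0 := by
      by_cases hmem : (lo + hi)/2 = F 0
      · refine ⟨(lo + (lo + hi)/2)/2, by linarith, by linarith, ?_⟩
        rw [← hmem]; intro hcon; linarith [hcon]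
      · exact ⟨(lo + hi)/2, by linarith, by linarith, hmem⟩
    obtain ⟨hplo, hphi, hpne⟩ := hp
    have hlo0 : 0 < lo := lt_min (cdf_pos hFmono hF0 x) (cdf_pos hGmono hG0 x)
    have hhi1 : hi < 1 := max_lt (cdf_lt_one hFmono hF1 x) (cdf_lt_one hGmono hG1 x)
    have hp0 : 0 < p := lt_trans hlo0 hplo
    have hp1 : p < 1 := lt_trans hphi hhi1
    obtain ⟨a, ha⟩ := cdf_surj hFmono hFcont hF0 hF1 hp0 hp1
    obtain ⟨b, hb⟩ := cdf_surj hGmono hGcont hG0 hG1 hp0 hp1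
    refine ⟨p, a, b, hp0, hp1, ha, hb, ?_, ?_⟩
    · -- a ≠ b : p is strictly between F x and G x
      rcases hx.lt_or_gt with h' | h'
      · -- F x < G x : a > x > b
        have hlo' : lo = F x := min_eq_left h'.le
        have hhi' : hi = G x := max_eq_right h'.le
        have hax : x < a := hFmono.lt_iff_lt.mp (by rw [ha, ← hlo']; exact hplo)
        have hbx : b < x := hGmono.lt_iff_lt.mp (by rw [hb, ← hhi']; exact hphi)
        exact (by linarith : b < a).ne'
      · have hlo' : lo = G x := min_eq_right h'.le
        have hhi' : hi = F x := max_eq_left h'.le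
        have hbx : x < b := hGmono.lt_iff_lt.mp (by rw [hb, ← hlo']; exact hplo)
        have hax : a < x := hFmono.lt_iff_lt.mp (by rw [ha, ← hhi']; exact hphi)
        exact (by linarith : a < b).ne
    · -- same sign
      rcases lt_or_gt_of_ne hpne with h' | h'
      · -- p < F 0 = G 0: a < 0, b < 0
        have ha0 : a < 0 := hFmono.lt_iff_lt.mp (by rw [ha]; exact h')
        have hb0 : b < 0 := hGmono.lt_iff_lt.mp (by rw [hb]; rw [← h]; exact h')
        nlinarith
      · have ha0 : 0 < a := hFmono.lt_iff_lt.mp (by rw [ha]; exact h')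
        have hb0 : 0 < b := hGmono.lt_iff_lt.mp (by rw [hb]; rw [← h]; exact h')
        nlinarith
  · obtain ⟨p, b, a, hp0, hp1, hb, ha, hne, hab⟩ :=
      exists_pab_of_lt hGmono hGcont hG0 hG1 hFmono hFcont hF0 hF1 h
    exact ⟨p, a, b, hp0, hp1, ha, hb, hne.symm, by nlinarith⟩
end CDF


lemma alphaN_nonneg (n : ℕ) : 0 ≤ alphaN n := Real.sqrt_nonneg _

lemma alphaN_tendsto : Tendsto alphaN atTop (𝓝 0) := by
  have hupper : Tendsto (fun n : ℕ => Real.sqrt ((Real.log n)^2 / n)) atTop (𝓝 0) := by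
    show Tendsto (fun n : ℕ => Real.sqrt ((Real.log n)^2 / n)) atTop (𝓝 0)
    have h1 : Tendsto (fun x : ℝ => Real.log x ^ 2 / (1 * x + 0)) atTop (𝓝 0) :=
      Real.tendsto_pow_log_div_mul_add_atTop 1 0 2 one_ne_zero
    have h2 : Tendsto (fun x : ℝ => Real.log x ^ 2 / x) atTop (𝓝 0) := by
      simpa using h1
    have h3 : Tendsto (fun n : ℕ => Real.log n ^ 2 / n) atTop (𝓝 0) :=
      h2.comp tendsto_natCast_atTop_atTop
    have h4 := (Real.continuous_sqrt.tendsto 0).comp h3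
    rw [Real.sqrt_zero] at h4
    exact h4
  apply tendsto_of_tendsto_of_tendsto_of_le_of_le' tendsto_const_nhds hupper
  · exact Eventually.of_forall alphaN_nonneg
  · filter_upwards [eventually_ge_atTop 1] with n hn
    apply Real.sqrt_le_sqrt
    have hn1 : (1:ℝ) ≤ n := by exact_mod_cast hn
    have hlog : 0 ≤ Real.log n := Real.log_nonneg hn1
    have hll : Real.log (Real.log n) ≤ Real.log n := Real.log_le_self hlog
    have hn0 : (0:ℝ) ≤ n := by linarith
    have : Real.log n * Real.log (Real.log n) ≤ Real.log n ^ 2 := by nlinarith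
    rcases eq_or_lt_of_le hn0 with h | h
    · rw [← h]; simp
    · gcongr



lemma part2_aux {Ω : Type*} [MeasurableSpace Ω] (μ : Measure Ω) [IsProbabilityMeasure μ]
    (q : ℕ → Ω → ℝ) (P : ℕ → Ω → Prop) (r : ℕ → Ω → ℝ) (ρ : ℝ) (hρ : 1 < ρ)
    (hr : TendstoInMeasure μ r atTop (fun _ => ρ))
    (hle : ∀ᶠ n in atTop, ∀ ω, r n ω ≤ q n ω) :
    Tendsto (fun n => μ {ω | |q n ω - 1| < (ρ-1)/3 ∧ P n ω}) atTop (𝓝 0) := by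
  set δ := (ρ-1)/3 with hδdef
  have hδ : 0 < δ := by rw [hδdef]; linarith
  have h0 : Tendsto (fun n => μ {ω | δ ≤ dist (r n ω) ρ}) atTop (𝓝 0) := tendstoInMeasure_iff_dist.mp hr δ hδ
  apply tendsto_of_tendsto_of_tendsto_of_le_of_le' tendsto_const_nhds h0
  · exact Eventually.of_forall fun n => by simp
  · filter_upwards [hle] with n hn
    apply measure_mono
    rintro ω ⟨h1, -⟩
    show δ ≤ dist (r n ω) ρ
    have hq : q n ω < 1 + δ := by
      have := (abs_lt.mp h1).2
      linarith
    have hrq : r n ω ≤ q n ω := hn ω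
    rw [Real.dist_eq]
    calc δ ≤ ρ - r n ω := by rw [hδdef] at *; linarith
      _ ≤ |ρ - r n ω| := le_abs_self _
      _ = |r n ω - ρ| := abs_sub_comm _ _

lemma finite_mid (n : ℕ) :
    Finite {i : ℕ // alphaN n * n < (i : ℝ) ∧ (i : ℝ) < (1 - alphaN n) * n} := by
  have hsub : {i : ℕ | alphaN n * n < (i : ℝ) ∧ (i : ℝ) < (1 - alphaN n) * n} ⊆
      Set.Iio (n + 1) := by
    intro i hi
    have h2 := hi.2
    have ha := alphaN_nonneg n
    have hn0 : (0:ℝ) ≤ n := Nat.cast_nonneg n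
    have hcast : (i : ℝ) < (n : ℝ) + 1 := by nlinarith
    have : i < n + 1 := by exact_mod_cast hcast
    exact this
  exact ((Set.finite_Iio (n + 1)).subset hsub).to_subtype

end Aux

/-- Let `F` and `G` be two distinct monotone increasing, continuous
CDFs, `X_i` i.i.d. with CDF `F` and `Y_i` i.i.d. with CDF `G`, all independent. With
`α_n = √(log n log log n / n)`, `β_n = 1 - α_n` and `Λ_m = {i : α_n n < i < β_n n}`,
the convergences `q_{n,Λ_m}^(1) →_P 1` and `q_{n,Λ_m}^(2) →_P 1` cannot hold
simultaneously; in fact there is `ε > 0` with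
`P(|q_{n,Λ_m}^(1) − 1| < ε ∧ |q_{n,Λ_m}^(2) − 1| < ε) → 0`. -/
theorem stmt6 {Ω : Type*} [MeasurableSpace Ω] (μ : Measure Ω) [IsProbabilityMeasure μ]
    (F G : ℝ → ℝ)
    (hFmono : StrictMono F) (hFcont : Continuous F)
    (hF0 : Tendsto F atBot (𝓝 0)) (hF1 : Tendsto F atTop (𝓝 1))
    (hGmono : StrictMono G) (hGcont : Continuous G)
    (hG0 : Tendsto G atBot (𝓝 0)) (hG1 : Tendsto G atTop (𝓝 1))
    (hFG : F ≠ G)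
    (X Y : ℕ → Ω → ℝ)
    (hmeas : ∀ j, Measurable (Sum.elim X Y j))
    (hindep : iIndepFun (Sum.elim X Y) μ)
    (hX : ∀ i x, μ {ω | X i ω ≤ x} = ENNReal.ofReal (F x))
    (hY : ∀ i x, μ {ω | Y i ω ≤ x} = ENNReal.ofReal (G x)) :
    ¬ (TendstoInMeasure μ (fun n ω => qMid n (fun j => X j ω) (fun j => Y j ω))
          atTop (fun _ => (1 : ℝ)) ∧
        TendstoInMeasure μ (fun n ω => qMid n (fun j => Y j ω) (fun j => X j ω))
          atTop (fun _ => (1 : ℝ))) ∧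
      ∃ ε > (0 : ℝ),
        Tendsto (fun n => μ {ω |
            |qMid n (fun j => X j ω) (fun j => Y j ω) - 1| < ε ∧
            |qMid n (fun j => Y j ω) (fun j => X j ω) - 1| < ε})
          atTop (𝓝 0) := by
  -- basic measurability and independence facts
  have hXmeas : ∀ i, Measurable (X i) := fun i => hmeas (Sum.inl i)
  have hYmeas : ∀ i, Measurable (Y i) := fun i => hmeas (Sum.inr i)
  have hXindep : Pairwise fun i j => IndepFun (X i) (X j) μ := fun i j hij =>
    hindep.indepFun (show (Sum.inl i : ℕ ⊕ ℕ) ≠ Sum.inl j by simp [hij])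
  have hYindep : Pairwise fun i j => IndepFun (Y i) (Y j) μ := fun i j hij =>
    hindep.indepFun (show (Sum.inr i : ℕ ⊕ ℕ) ≠ Sum.inr j by simp [hij])
  have hF0' : ∀ x, 0 ≤ F x := fun x => (cdf_pos hFmono hF0 x).le
  have hG0' : ∀ x, 0 ≤ G x := fun x => (cdf_pos hGmono hG0 x).le
  -- choose p, a, b
  obtain ⟨p, a, b, hp0, hp1, hFa, hGb, hne, hab⟩ :=
    exists_pab hFmono hFcont hF0 hF1 hGmono hGcont hG0 hG1 hFG
  have hane : a ≠ 0 := fun h => by rw [h] at hab; simp at hab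
  have hbne : b ≠ 0 := fun h => by rw [h] at hab; simp at hab
  -- the index sequence
  set I : ℕ → ℕ := fun n => ⌈p * n⌉₊ with hIdef
  have hIb : ∀ n, 1 ≤ n → 1 ≤ I n ∧ I n ≤ n := by
    intro n hn
    have hn1 : (1:ℝ) ≤ n := by exact_mod_cast hn
    constructor
    · have hpos : 0 < I n := by rw [hIdef]; exact Nat.ceil_pos.mpr (by nlinarith)
      omega
    · rw [hIdef]
      exact Nat.ceil_le.mpr (by nlinarith)
  have hIlow : ∀ n : ℕ, p * n ≤ I n := fun n => Nat.le_ceil _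
  have hIhigh : ∀ n : ℕ, (I n : ℝ) < p * n + 1 := by
    intro n
    exact Nat.ceil_lt_add_one (by positivity)
  have hIp : Tendsto (fun n => (I n : ℝ) / n) atTop (𝓝 p) := by
    have hup : Tendsto (fun n : ℕ => p + 1 / (n : ℝ)) atTop (𝓝 p) := by
      have := tendsto_const_nhds (x := p) (f := atTop (α := ℕ)) |>.add
        tendsto_one_div_atTop_nhds_zero_nat
      simpa using this
    apply tendsto_of_tendsto_of_tendsto_of_le_of_le' tendsto_const_nhds hup
    · filter_upwards [eventually_ge_atTop 1] with n hn
      have hnpos : (0:ℝ) < n := by exact_mod_cast hn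
      rw [le_div_iff₀ hnpos]
      exact hIlow n
    · filter_upwards [eventually_ge_atTop 1] with n hn
      have hnpos : (0:ℝ) < n := by exact_mod_cast hn
      rw [div_le_iff₀ hnpos]
      have hmul : (p + 1 / (n:ℝ)) * n = p * n + 1 := by field_simp
      rw [hmul]
      exact (hIhigh n).le
  -- a.s. convergence of the order statistics
  have hXae := quantile_ae μ F hFmono X hXmeas hXindep hX hF0' a p hFa I hIb hIp
  have hYae := quantile_ae μ G hGmono Y hYmeas hYindep hY hG0' b p hGb I hIb hIp
  -- the two ratio sequences
  set r1 : ℕ → Ω → ℝ := fun n ω =>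
    orderStat n (fun j => X j ω) (I n) / orderStat n (fun j => Y j ω) (I n) with hr1def
  set r2 : ℕ → Ω → ℝ := fun n ω =>
    orderStat n (fun j => Y j ω) (I n) / orderStat n (fun j => X j ω) (I n) with hr2def
  have hr1meas : ∀ n, AEStronglyMeasurable (r1 n) μ := by
    intro n
    rcases Nat.eq_zero_or_pos n with rfl | hn
    · have h : r1 0 = fun _ => 0 := by
        funext ω; simp [hr1def, orderStat]
      rw [h]; exact aestronglyMeasurable_const
    · exact ((measurable_orderStat X hXmeas (hIb n hn).1 (hIb n hn).2).div
        (measurable_orderStat Y hYmeas (hIb n hn).1 (hIb n hn).2)).aestronglyMeasurable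
  have hr2meas : ∀ n, AEStronglyMeasurable (r2 n) μ := by
    intro n
    rcases Nat.eq_zero_or_pos n with rfl | hn
    · have h : r2 0 = fun _ => 0 := by
        funext ω; simp [hr2def, orderStat]
      rw [h]; exact aestronglyMeasurable_const
    · exact ((measurable_orderStat Y hYmeas (hIb n hn).1 (hIb n hn).2).div
        (measurable_orderStat X hXmeas (hIb n hn).1 (hIb n hn).2)).aestronglyMeasurable
  have hr1ae : ∀ᵐ ω ∂μ, Tendsto (fun n => r1 n ω) atTop (𝓝 (a / b)) := by
    filter_upwards [hXae, hYae] with ω h1 h2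
    exact h1.div h2 hbne
  have hr2ae : ∀ᵐ ω ∂μ, Tendsto (fun n => r2 n ω) atTop (𝓝 (b / a)) := by
    filter_upwards [hXae, hYae] with ω h1 h2
    exact h2.div h1 hane
  have htim1 : TendstoInMeasure μ r1 atTop (fun _ => a / b) :=
    tendstoInMeasure_of_tendsto_ae hr1meas hr1ae
  have htim2 : TendstoInMeasure μ r2 atTop (fun _ => b / a) :=
    tendstoInMeasure_of_tendsto_ae hr2meas hr2ae
  -- eventual membership of `I n` in the middle index set
  have hev1 : ∀ᶠ n in atTop, alphaN n * n < (I n : ℝ) := by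
    filter_upwards [alphaN_tendsto.eventually_lt_const (show (0:ℝ) < p/2 by linarith),
      eventually_ge_atTop 1] with n h1 h2
    have hn1 : (1:ℝ) ≤ n := by exact_mod_cast h2
    have ha := alphaN_nonneg n
    have hle := hIlow n
    nlinarith
  have hev2 : ∀ᶠ n in atTop, (I n : ℝ) < (1 - alphaN n) * n := by
    have h2p : (0:ℝ) < (1 - p)/2 := by linarith
    filter_upwards [alphaN_tendsto.eventually_lt_const h2p,
      tendsto_natCast_atTop_atTop.eventually_ge_atTop (2/(1-p) + 1)] with n h1 h2
    have hIle := hIhigh n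
    have h1pne : (1:ℝ) - p ≠ 0 := by linarith
    have hkey : ((1-p)/2) * (2/(1-p) + 1) = 1 + (1-p)/2 := by
      field_simp
    have hmul1 : ((1-p)/2) * (2/(1-p) + 1) ≤ ((1-p)/2) * n :=
      mul_le_mul_of_nonneg_left h2 (by linarith)
    have hn0 : (0:ℝ) ≤ n := by
      have h2pos : (0:ℝ) < 2/(1-p) := div_pos (by linarith) (by linarith)
      linarith
    have hmul2 : alphaN n * n ≤ ((1-p)/2) * n := mul_le_mul_of_nonneg_right h1.le hn0
    nlinarith
  -- the sup dominates the ratio at index I n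
  have hle1 : ∀ᶠ n in atTop, ∀ ω : Ω,
      r1 n ω ≤ qMid n (fun j => X j ω) (fun j => Y j ω) := by
    filter_upwards [hev1, hev2] with n hn1 hn2
    intro ω
    haveI := finite_mid n
    have hbdd : BddAbove (Set.range fun i :
        {i : ℕ // alphaN n * n < (i : ℝ) ∧ (i : ℝ) < (1 - alphaN n) * n} =>
        orderStat n (fun j => X j ω) i.1 / orderStat n (fun j => Y j ω) i.1) :=
      Set.Finite.bddAbove (Set.finite_range _)
    exact le_ciSup hbdd ⟨I n, hn1, hn2⟩
  have hle2 : ∀ᶠ n in atTop, ∀ ω : Ω,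
      r2 n ω ≤ qMid n (fun j => Y j ω) (fun j => X j ω) := by
    filter_upwards [hev1, hev2] with n hn1 hn2
    intro ω
    haveI := finite_mid n
    have hbdd : BddAbove (Set.range fun i :
        {i : ℕ // alphaN n * n < (i : ℝ) ∧ (i : ℝ) < (1 - alphaN n) * n} =>
        orderStat n (fun j => Y j ω) i.1 / orderStat n (fun j => X j ω) i.1) :=
      Set.Finite.bddAbove (Set.finite_range _)
    exact le_ciSup hbdd ⟨I n, hn1, hn2⟩
  -- one of the two limit ratios exceeds 1
  have hratio : 1 < a / b ∨ 1 < b / a := by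
    rcases mul_pos_iff.mp hab with ⟨ha', hb'⟩ | ⟨ha', hb'⟩
    · rcases lt_or_gt_of_ne hne with h | h
      · right; rwa [one_lt_div ha']
      · left; rwa [one_lt_div hb']
    · rcases lt_or_gt_of_ne hne with h | h
      · left
        rw [show a / b = (-a) / (-b) by rw [neg_div_neg_eq]]
        rw [one_lt_div (by linarith : (0:ℝ) < -b)]
        linarith
      · right
        rw [show b / a = (-b) / (-a) by rw [neg_div_neg_eq]]
        rw [one_lt_div (by linarith : (0:ℝ) < -a)]
        linarith
  -- Part 2
  have hpart2 : ∃ ε > (0 : ℝ),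
      Tendsto (fun n => μ {ω |
          |qMid n (fun j => X j ω) (fun j => Y j ω) - 1| < ε ∧
          |qMid n (fun j => Y j ω) (fun j => X j ω) - 1| < ε})
        atTop (𝓝 0) := by
    rcases hratio with hρ | hρ
    · refine ⟨(a/b - 1)/3, by linarith, ?_⟩
      exact part2_aux μ (fun n ω => qMid n (fun j => X j ω) (fun j => Y j ω))
        (fun n ω => |qMid n (fun j => Y j ω) (fun j => X j ω) - 1| < (a/b - 1)/3)
        r1 (a/b) hρ htim1 hle1
    · refine ⟨(b/a - 1)/3, by linarith, ?_⟩
      have h := part2_aux μ (fun n ω => qMid n (fun j => Y j ω) (fun j => X j ω))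
        (fun n ω => |qMid n (fun j => X j ω) (fun j => Y j ω) - 1| < (b/a - 1)/3)
        r2 (b/a) hρ htim2 hle2
      have hset : (fun n => μ {ω |
            |qMid n (fun j => X j ω) (fun j => Y j ω) - 1| < (b/a - 1)/3 ∧
            |qMid n (fun j => Y j ω) (fun j => X j ω) - 1| < (b/a - 1)/3})
          = (fun n => μ {ω |
            |qMid n (fun j => Y j ω) (fun j => X j ω) - 1| < (b/a - 1)/3 ∧
            |qMid n (fun j => X j ω) (fun j => Y j ω) - 1| < (b/a - 1)/3}) := by
        funext n
        congr 1
        ext ω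
        exact and_comm
      rw [hset]
      exact h
  refine ⟨?_, hpart2⟩
  -- Part 1 follows from Part 2
  rintro ⟨hq1, hq2⟩
  obtain ⟨ε, hε, hE⟩ := hpart2
  have hA := tendstoInMeasure_iff_dist.mp hq1 ε hε
  have hB := tendstoInMeasure_iff_dist.mp hq2 ε hε
  have hcover : ∀ n, (1 : ℝ≥0∞) ≤
      μ {ω | |qMid n (fun j => X j ω) (fun j => Y j ω) - 1| < ε ∧
             |qMid n (fun j => Y j ω) (fun j => X j ω) - 1| < ε}
      + μ {ω | ε ≤ dist (qMid n (fun j => X j ω) (fun j => Y j ω)) ((fun _ => (1:ℝ)) ω)}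
      + μ {ω | ε ≤ dist (qMid n (fun j => Y j ω) (fun j => X j ω)) ((fun _ => (1:ℝ)) ω)} := by
    intro n
    have huniv : (Set.univ : Set Ω) ⊆
        ({ω | |qMid n (fun j => X j ω) (fun j => Y j ω) - 1| < ε ∧
              |qMid n (fun j => Y j ω) (fun j => X j ω) - 1| < ε}
        ∪ {ω | ε ≤ dist (qMid n (fun j => X j ω) (fun j => Y j ω)) ((fun _ => (1:ℝ)) ω)})
        ∪ {ω | ε ≤ dist (qMid n (fun j => Y j ω) (fun j => X j ω)) ((fun _ => (1:ℝ)) ω)} := by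
      intro ω _
      by_cases h2 : ε ≤ dist (qMid n (fun j => Y j ω) (fun j => X j ω)) 1
      · exact Or.inr h2
      · by_cases h1 : ε ≤ dist (qMid n (fun j => X j ω) (fun j => Y j ω)) 1
        · exact Or.inl (Or.inr h1)
        · push_neg at h1 h2
          rw [Real.dist_eq] at h1 h2
          exact Or.inl (Or.inl ⟨h1, h2⟩)
    calc (1 : ℝ≥0∞) = μ Set.univ := measure_univ.symm
      _ ≤ μ _ := measure_mono huniv
      _ ≤ _ := le_trans (measure_union_le _ _) (by gcongr; exact measure_union_le _ _)
  have hlim : Tendsto (fun n =>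
      μ {ω | |qMid n (fun j => X j ω) (fun j => Y j ω) - 1| < ε ∧
             |qMid n (fun j => Y j ω) (fun j => X j ω) - 1| < ε}
      + μ {ω | ε ≤ dist (qMid n (fun j => X j ω) (fun j => Y j ω)) ((fun _ => (1:ℝ)) ω)}
      + μ {ω | ε ≤ dist (qMid n (fun j => Y j ω) (fun j => X j ω)) ((fun _ => (1:ℝ)) ω)})
      atTop (𝓝 0) := by
    have h := (hE.add hA).add hB
    simpa using h
  have hcontr : (1 : ℝ≥0∞) ≤ 0 := ge_of_tendsto hlim (Eventually.of_forall hcover)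
  simp at hcontr
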